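/- Define W₀ on [1,∞) by W₀(y)=H_l(y) for y∈[1,Ψ(f₀)] and W₀(y)=B₀ for y>Ψ(f₀). Then: (i) there exists a convex, nonpositive function w on [0,∞) with w(y)≤H_l(y) for all y∈[0,∞) and w(y)=W₀(y) for all y∈[1,∞); and (ii) every convex, nonpositive function g on [0,∞) with g≤H_l on [0,∞) satisfies g(y)≤W₀(y) for all y∈[1,∞). In particular B₀<0 and the restriction to [1,∞) of the greatest nonpositive convex minorant of H_l on [0,∞) equals W₀. -/

import Mathlib

set_option maxHeartbeats 1000000 in
/-- the restriction to [1,∞) of the greatest nonpositive convex minorant of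
H_l on [0,∞) equals W₀, and B₀ < 0. -/
theorem stmt_3 (α δ lam : ℝ) (hα : 0 < α) (hδ : 0 < δ) (hlam : 0 < lam)
    (hltd : lam < α * δ)
    (f₀ : ℝ)
    (hf₀ : f₀ = (1 / Real.sqrt (2 * α)) * (Real.sqrt ((α * δ + lam) / (α * δ - lam)) - 1))
    (Ψ : ℝ → ℝ) (hΨ : ∀ x, Ψ x = Real.exp (2 * Real.sqrt (2 * α) * x))
    (Hl : ℝ → ℝ)
    (hHl : ∀ y, 0 < y → Hl y = Real.sqrt y *
      (-(lam / α ^ 2) + ((δ - lam / α) / (8 * α)) * (Real.log y) ^ 2))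
    (hHl0 : Hl 0 = 0)
    (B₀ : ℝ)
    (hB₀ : B₀ = -(2 * f₀ / (α * Real.sqrt (2 * α))) * (α * δ - lam) *
      Real.exp (f₀ * Real.sqrt (2 * α)))
    (W₀ : ℝ → ℝ)
    (hW₀l : ∀ y ∈ Set.Icc 1 (Ψ f₀), W₀ y = Hl y)
    (hW₀r : ∀ y, Ψ f₀ < y → W₀ y = B₀) :
    (∃ w : ℝ → ℝ, ConvexOn ℝ (Set.Ici 0) w ∧ (∀ y ∈ Set.Ici (0 : ℝ), w y ≤ 0) ∧
      (∀ y ∈ Set.Ici (0 : ℝ), w y ≤ Hl y) ∧ (∀ y ∈ Set.Ici (1 : ℝ), w y = W₀ y)) ∧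
    (∀ g : ℝ → ℝ, ConvexOn ℝ (Set.Ici 0) g → (∀ y ∈ Set.Ici (0 : ℝ), g y ≤ 0) →
      (∀ y ∈ Set.Ici (0 : ℝ), g y ≤ Hl y) → ∀ y ∈ Set.Ici (1 : ℝ), g y ≤ W₀ y) ∧
    B₀ < 0 := by
  have h2α : (0 : ℝ) < 2 * α := by linarith
  set r := Real.sqrt (2 * α) with hrdef
  have hr : 0 < r := Real.sqrt_pos.mpr h2α
  have hr2 : r ^ 2 = 2 * α := Real.sq_sqrt h2α.le
  clear_value r
  have hd : 0 < α * δ - lam := by linarith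
  set s := Real.sqrt ((α * δ + lam) / (α * δ - lam)) with hsdef
  have hs0 : 0 ≤ s := Real.sqrt_nonneg _
  have hs2 : s ^ 2 * (α * δ - lam) = α * δ + lam := by
    have h := Real.sq_sqrt (show (0:ℝ) ≤ (α * δ + lam) / (α * δ - lam) by positivity)
    rw [← hsdef] at h
    rw [h, div_mul_cancel₀ _ hd.ne']
  have hsq : 1 < s ^ 2 := by
    have h := Real.sq_sqrt (show (0:ℝ) ≤ (α * δ + lam) / (α * δ - lam) by positivity)
    rw [← hsdef] at h
    rw [h, lt_div_iff₀ hd]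
    linarith
  have hs1 : 1 < s := by nlinarith
  clear_value s
  have hf0 : f₀ = (s - 1) / r := by rw [hf₀]; ring
  have hf0pos : 0 < f₀ := by rw [hf0]; exact div_pos (by linarith) hr
  have hfr : f₀ * r = s - 1 := by rw [hf0]; field_simp
  set E := Real.exp (2 * (s - 1)) with hEdef
  have hE0 : (0 : ℝ) < E := Real.exp_pos _
  have hE1 : 1 < E := by
    have h := Real.add_one_lt_exp (show 2 * (s - 1) ≠ 0 from ne_of_gt (by linarith))
    rw [hEdef]
    linarith
  clear_value E
  have hΨf : Ψ f₀ = E := by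
    rw [hΨ, hEdef, hf0]
    congr 1
    field_simp
  set c := (δ - lam / α) / (8 * α) with hcdef
  set m := lam / α ^ 2 with hmdef
  have hcpos : 0 < c := by
    rw [hcdef]
    have h1 : 0 < δ - lam / α := by
      rw [sub_pos, div_lt_iff₀ hα]
      linarith
    positivity
  have hmpos : 0 < m := by rw [hmdef]; positivity
  have hc8 : 8 * α ^ 2 * c = α * δ - lam := by rw [hcdef]; field_simp
  have hm2 : α ^ 2 * m = lam := by rw [hmdef]; field_simp
  clear_value c m
  set φ : ℝ → ℝ := fun t => Real.exp (t / 2) * (c * t ^ 2 - m) with hφ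
  set p : ℝ → ℝ := fun t => c * t ^ 2 / 2 + 2 * c * t - m / 2 with hp
  set ψ : ℝ → ℝ := fun t => Real.exp (-(t / 2)) * p t with hψ
  clear_value φ p ψ
  -- derivatives
  have hφd : ∀ t : ℝ, HasDerivAt φ (Real.exp (t / 2) * p t) t := by
    intro t
    have h1 : HasDerivAt (fun t : ℝ => t / 2) (1 / 2) t := by
      simpa using (hasDerivAt_id t).div_const 2
    have h2 : HasDerivAt (fun t : ℝ => Real.exp (t / 2)) (Real.exp (t / 2) * (1 / 2)) t := h1.exp
    have h3 : HasDerivAt (fun t : ℝ => c * t ^ 2 - m) (c * (2 * t)) t := by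
      simpa using ((hasDerivAt_pow 2 t).const_mul c).sub_const m
    have h4 := h2.mul h3
    simp only [hφ, hp]
    refine h4.congr_deriv ?_
    ring
  have hψd : ∀ t : ℝ, HasDerivAt ψ (Real.exp (-(t / 2)) * (8 * c + m - c * t ^ 2) / 4) t := by
    intro t
    have h1 : HasDerivAt (fun t : ℝ => -(t / 2)) (-(1 / 2)) t := by
      exact ((hasDerivAt_id t).div_const 2).neg
    have h2 : HasDerivAt (fun t : ℝ => Real.exp (-(t / 2))) (Real.exp (-(t / 2)) * (-(1 / 2))) t :=
      h1.exp
    have h3 : HasDerivAt p (c * (2 * t) / 2 + 2 * c) t := by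
      simp only [hp]
      have h31 := ((((hasDerivAt_pow 2 t).const_mul c).div_const 2).add
        ((hasDerivAt_id t).const_mul (2 * c))).sub_const (m / 2)
      refine h31.congr_deriv ?_
      push_cast
      ring
    have h4 := h2.mul h3
    rw [hψ]; refine h4.congr_deriv ?_
    simp only [hp]
    ring
  -- key values
  have hpT : p (2 * (s - 1)) = 0 := by
    have hmul : (4 * α ^ 2) * p (2 * (s - 1)) = 0 := by
      simp only [hp]
      linear_combination s ^ 2 * hc8 - hc8 - 2 * hm2 + hs2
    have h4 : (4 : ℝ) * α ^ 2 ≠ 0 := by positivity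
    exact (mul_eq_zero.mp hmul).resolve_left h4
  have hψT : ψ (2 * (s - 1)) = 0 := by simp only [hψ]; rw [hpT, mul_zero]
  have hψ0 : ψ 0 = -(m / 2) := by simp [hψ, hp]
  have hφ0 : φ 0 = -m := by simp [hφ]
  have hT0 : (0 : ℝ) ≤ 2 * (s - 1) := by linarith
  have hφT : φ (2 * (s - 1)) = B₀ := by
    have hkey : c * (2 * (s - 1)) ^ 2 - m = -(2 * f₀ / (α * r)) * (α * δ - lam) := by
      rw [hf0]
      have hα' : α ≠ 0 := hα.ne'
      have hr' : r ≠ 0 := hr.ne'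
      field_simp
      linear_combination (α * (4 * c * (s - 1) ^ 2 - m)) * hr2 + (s - 1) ^ 2 * hc8
        - 2 * hm2 + hs2
    simp only [hφ]
    rw [show 2 * (s - 1) / 2 = s - 1 by ring, hkey, hB₀, hfr]
    ring
  -- p sign
  have hpmono : ∀ t u : ℝ, 0 ≤ t → t ≤ u → p t ≤ p u := by
    intro t u ht htu
    simp only [hp]
    nlinarith [mul_nonneg (mul_nonneg (sub_nonneg.mpr htu) hcpos.le)
      (by linarith : (0:ℝ) ≤ u + t), mul_nonneg (sub_nonneg.mpr htu) hcpos.le]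
  have hpnonpos : ∀ t ∈ Set.Icc (0 : ℝ) (2 * (s - 1)), p t ≤ 0 := by
    intro t ht
    have := hpmono t (2 * (s - 1)) ht.1 ht.2
    rw [hpT] at this; exact this
  have hpnonneg : ∀ t : ℝ, 2 * (s - 1) ≤ t → 0 ≤ p t := by
    intro t ht
    have := hpmono (2 * (s - 1)) t hT0 ht
    rw [hpT] at this; exact this
  -- monotonicity of φ and ψ
  have hφanti : AntitoneOn φ (Set.Icc 0 (2 * (s - 1))) := by
    apply antitoneOn_of_deriv_nonpos (convex_Icc _ _)
    · exact fun t _ => (hφd t).continuousAt.continuousWithinAt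
    · exact fun t _ => (hφd t).differentiableAt.differentiableWithinAt
    · intro t ht
      rw [interior_Icc] at ht
      rw [(hφd t).deriv]
      have h1 : p t ≤ 0 := hpnonpos t ⟨ht.1.le, ht.2.le⟩
      have h2 := mul_le_mul_of_nonneg_left h1 (Real.exp_pos (t / 2)).le
      simpa using h2
  have hφmono : MonotoneOn φ (Set.Ici (2 * (s - 1))) := by
    apply monotoneOn_of_deriv_nonneg (convex_Ici _)
    · exact fun t _ => (hφd t).continuousAt.continuousWithinAt
    · exact fun t _ => (hφd t).differentiableAt.differentiableWithinAt
    · intro t ht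
      rw [interior_Ici] at ht
      rw [(hφd t).deriv]
      have h1 : 0 ≤ p t := hpnonneg t ht.le
      have h2 := Real.exp_pos (t / 2)
      positivity
  have hψmono : MonotoneOn ψ (Set.Icc 0 (2 * (s - 1))) := by
    apply monotoneOn_of_deriv_nonneg (convex_Icc _ _)
    · exact fun t _ => (hψd t).continuousAt.continuousWithinAt
    · exact fun t _ => (hψd t).differentiableAt.differentiableWithinAt
    · intro t ht
      rw [interior_Icc] at ht
      rw [(hψd t).deriv]
      have h1 : c * t ^ 2 ≤ 8 * c + m := by
        have ht2 : c * t ^ 2 ≤ c * (2 * (s - 1)) ^ 2 := by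
          nlinarith [mul_nonneg (mul_nonneg hcpos.le (sub_nonneg.mpr ht.2.le))
            (by linarith [ht.1] : (0:ℝ) ≤ 2 * (s - 1) + t)]
        have hkey : c * (2 * (s - 1)) ^ 2 ≤ 8 * c + m := by
          have h8 : α ^ 2 * (8 * c + m - c * (2 * (s - 1)) ^ 2) = (α * δ - lam) * s := by
            linear_combination (1 - (s - 1) ^ 2 / 2) * hc8 + hm2 - hs2 / 2
          have h9 : 0 ≤ α ^ 2 * (8 * c + m - c * (2 * (s - 1)) ^ 2) := by
            rw [h8]; exact mul_nonneg hd.le hs0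
          nlinarith [h9, pow_pos hα 2]
        linarith
      have h2 := Real.exp_pos (-(t / 2))
      have h3 : 0 ≤ 8 * c + m - c * t ^ 2 := by linarith
      exact div_nonneg (mul_nonneg h2.le h3) (by norm_num)
  -- consequences
  have hφle : ∀ t ∈ Set.Icc (0 : ℝ) (2 * (s - 1)), φ t ≤ -m := by
    intro t ht
    have := hφanti (Set.left_mem_Icc.mpr hT0) ht ht.1
    rw [hφ0] at this; exact this
  have hφgeB : ∀ t : ℝ, 0 ≤ t → B₀ ≤ φ t := by
    intro t ht
    rcases le_total t (2 * (s - 1)) with h | h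
    · have := hφanti ⟨ht, h⟩ (Set.right_mem_Icc.mpr hT0) h
      rw [hφT] at this; exact this
    · have := hφmono (Set.self_mem_Ici) (Set.mem_Ici.mpr h) h
      rw [hφT] at this; exact this
  have hB0 : B₀ < 0 := by
    have := hφle (2 * (s - 1)) (Set.right_mem_Icc.mpr hT0)
    rw [hφT] at this; linarith
  have hψub : ∀ t ∈ Set.Icc (0 : ℝ) (2 * (s - 1)), ψ t ≤ 0 := by
    intro t ht
    have := hψmono ht (Set.right_mem_Icc.mpr hT0) ht.2
    rw [hψT] at this; exact this
  have hψlb : ∀ t ∈ Set.Icc (0 : ℝ) (2 * (s - 1)), -(m / 2) ≤ ψ t := by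
    intro t ht
    have := hψmono (Set.left_mem_Icc.mpr hT0) ht ht.1
    rw [hψ0] at this; exact this
  -- Hl in terms of φ
  have hsqrt : ∀ y : ℝ, 0 < y → Real.sqrt y = Real.exp (Real.log y / 2) := by
    intro y hy
    rw [Real.sqrt_eq_rpow, Real.rpow_def_of_pos hy]
    congr 1
    ring
  have hHlφ : ∀ y : ℝ, 0 < y → Hl y = φ (Real.log y) := by
    intro y hy
    rw [hHl y hy, hsqrt y hy]
    simp only [hφ]
    ring
  have hlogmem : ∀ z : ℝ, 1 ≤ z → z ≤ E → Real.log z ∈ Set.Icc (0 : ℝ) (2 * (s - 1)) := by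
    intro z hz1 hz2
    constructor
    · exact Real.log_nonneg hz1
    · have := Real.log_le_log (by linarith) hz2
      rwa [hEdef, Real.log_exp] at this
  -- the function w and its derivative
  set w : ℝ → ℝ := fun y => if y ≤ 1 then -(m * (y + 1) / 2) else
    if y ≤ E then φ (Real.log y) else B₀ with hw
  set w' : ℝ → ℝ := fun y => if y ≤ 1 then -(m / 2) else
    if y ≤ E then ψ (Real.log y) else 0 with hw'
  clear_value w w'
  have hLd : ∀ y : ℝ, HasDerivAt (fun y : ℝ => -(m * (y + 1) / 2)) (-(m / 2)) y := by
    intro y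
    have := ((((hasDerivAt_id y).add_const 1).const_mul m).div_const 2).neg
    refine this.congr_deriv ?_
    ring
  have hGd : ∀ y : ℝ, 0 < y → HasDerivAt (fun z => φ (Real.log z)) (ψ (Real.log y)) y := by
    intro y hy
    have h1 : HasDerivAt (fun z => φ (Real.log z))
        (Real.exp (Real.log y / 2) * p (Real.log y) * y⁻¹) y :=
      (hφd (Real.log y)).comp y (Real.hasDerivAt_log hy.ne')
    have h2 : Real.exp (-(Real.log y / 2)) * Real.exp (Real.log y) =
        Real.exp (Real.log y / 2) := by
      rw [← Real.exp_add]; congr 1; ring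
    rw [Real.exp_log hy] at h2
    have h3 : Real.exp (-(Real.log y / 2)) = Real.exp (Real.log y / 2) * y⁻¹ := by
      rw [eq_comm, mul_inv_eq_iff_eq_mul₀ hy.ne']
      exact h2.symm
    convert h1 using 1
    simp only [hψ]
    rw [h3]
    ring
  have hwd : ∀ y : ℝ, 0 < y → HasDerivAt w (w' y) y := by
    intro y hy
    rcases lt_trichotomy y 1 with h1 | h1 | h1
    · have hev : w =ᶠ[nhds y] fun z : ℝ => -(m * (z + 1) / 2) := by
        filter_upwards [Iio_mem_nhds h1] with z hz
        simp only [hw]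
        rw [if_pos (le_of_lt hz)]
      have h := (hLd y).congr_of_eventuallyEq hev
      have hv : w' y = -(m / 2) := by simp only [hw']; rw [if_pos h1.le]
      rw [hv]; exact h
    · subst h1
      have hleft : HasDerivWithinAt w (-(m / 2)) (Set.Iic 1) 1 := by
        apply ((hLd 1).hasDerivWithinAt).congr
        · intro z hz
          simp only [hw]
          rw [if_pos (Set.mem_Iic.mp hz)]
        · simp only [hw]; rw [if_pos le_rfl]
      have hright : HasDerivWithinAt w (-(m / 2)) (Set.Ici 1) 1 := by
        have hG := ((hGd 1 one_pos).hasDerivWithinAt (s := Set.Ici 1))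
        rw [Real.log_one, hψ0] at hG
        apply hG.congr_of_eventuallyEq
        · filter_upwards [mem_nhdsWithin_of_mem_nhds (Iio_mem_nhds hE1),
            self_mem_nhdsWithin] with z hz1 hz2
          simp only [hw]
          rcases eq_or_lt_of_le (Set.mem_Ici.mp hz2) with h | h
          · rw [if_pos h.ge, ← h, Real.log_one, hφ0]; ring
          · rw [if_neg (not_le.mpr h), if_pos (le_of_lt hz1)]
        · simp only [hw]
          rw [if_pos le_rfl, Real.log_one, hφ0]; ring
      have h := hleft.union hright
      rw [Set.Iic_union_Ici, hasDerivWithinAt_univ] at h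
      have hv : w' 1 = -(m / 2) := by simp only [hw']; rw [if_pos le_rfl]
      rw [hv]; exact h
    · rcases lt_trichotomy y E with h2 | h2 | h2
      · have hev : w =ᶠ[nhds y] fun z => φ (Real.log z) := by
          filter_upwards [Ioo_mem_nhds h1 h2] with z hz
          simp only [hw]
          rw [if_neg (not_le.mpr hz.1), if_pos hz.2.le]
        have h := (hGd y hy).congr_of_eventuallyEq hev
        have hv : w' y = ψ (Real.log y) := by
          simp only [hw']; rw [if_neg (not_le.mpr h1), if_pos h2.le]
        rw [hv]; exact h
      · rw [h2]
        have hleft : HasDerivWithinAt w 0 (Set.Iic E) E := by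
          have hG := ((hGd E hE0).hasDerivWithinAt (s := Set.Iic E))
          rw [hEdef, Real.log_exp, hψT] at hG
          rw [← hEdef] at hG
          apply hG.congr_of_eventuallyEq
          · filter_upwards [mem_nhdsWithin_of_mem_nhds (Ioi_mem_nhds hE1),
              self_mem_nhdsWithin] with z hz1 hz2
            simp only [hw]
            rw [if_neg (not_le.mpr (Set.mem_Ioi.mp hz1)), if_pos (Set.mem_Iic.mp hz2)]
          · simp only [hw]
            rw [if_neg (not_le.mpr hE1), if_pos le_rfl]
        have hright : HasDerivWithinAt w 0 (Set.Ici E) E := by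
          apply ((hasDerivAt_const E B₀).hasDerivWithinAt).congr
          · intro z hz
            rcases eq_or_lt_of_le (Set.mem_Ici.mp hz) with h | h
            · simp only [hw]
              rw [if_neg (not_le.mpr (show (1:ℝ) < z by rw [← h]; exact hE1)),
                if_pos (le_of_eq h.symm), ← h, hEdef, Real.log_exp, hφT]
            · simp only [hw]
              rw [if_neg (not_le.mpr (hE1.trans h)), if_neg (not_le.mpr h)]
          · simp only [hw]
            rw [if_neg (not_le.mpr hE1), if_pos le_rfl, hEdef, Real.log_exp, hφT]
        have h := hleft.union hright
        rw [Set.Iic_union_Ici, hasDerivWithinAt_univ] at h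
        have hv : w' E = 0 := by
          simp only [hw']
          rw [if_neg (not_le.mpr hE1), if_pos le_rfl, hEdef, Real.log_exp, hψT]
        rw [hv]; exact h
      · have hev : w =ᶠ[nhds y] fun _ => B₀ := by
          filter_upwards [Ioi_mem_nhds h2] with z hz
          simp only [hw]
          rw [if_neg (not_le.mpr (hE1.trans hz)), if_neg (not_le.mpr hz)]
        have h := (hasDerivAt_const y B₀).congr_of_eventuallyEq hev
        have hv : w' y = 0 := by
          simp only [hw']; rw [if_neg (not_le.mpr h1), if_neg (not_le.mpr h2)]
        rw [hv]; exact h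
  -- convexity of w
  have hwcont : ContinuousOn w (Set.Ici 0) := by
    intro y hy
    rcases eq_or_lt_of_le (Set.mem_Ici.mp hy) with h | h
    · have hc0 : ContinuousWithinAt (fun z : ℝ => -(m * (z + 1) / 2)) (Set.Ici 0) y :=
        ((hLd y).continuousAt).continuousWithinAt
      apply hc0.congr_of_eventuallyEq
      · filter_upwards [mem_nhdsWithin_of_mem_nhds (Iio_mem_nhds (show y < 1 by linarith))]
          with z hz
        simp only [hw]
        rw [if_pos (le_of_lt hz)]
      · simp only [hw]
        rw [if_pos (by linarith : y ≤ 1)]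
    · exact ((hwd y h).continuousAt).continuousWithinAt
  have hwdiff : DifferentiableOn ℝ w (interior (Set.Ici 0)) := by
    rw [interior_Ici]
    exact fun y hy => ((hwd y hy).differentiableAt).differentiableWithinAt
  have hwdmono : MonotoneOn (deriv w) (interior (Set.Ici (0:ℝ))) := by
    rw [interior_Ici]
    intro a ha b hb hab
    rw [(hwd a ha).deriv, (hwd b hb).deriv]
    simp only [hw']
    rcases le_or_gt a 1 with ha1 | ha1
    · rw [if_pos ha1]
      rcases le_or_gt b 1 with hb1 | hb1
      · rw [if_pos hb1]
      · rw [if_neg (not_le.mpr hb1)]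
        rcases le_or_gt b E with hb2 | hb2
        · rw [if_pos hb2]
          exact hψlb _ (hlogmem b hb1.le hb2)
        · rw [if_neg (not_le.mpr hb2)]
          linarith
    · rw [if_neg (not_le.mpr ha1)]
      have hb1 : ¬ b ≤ 1 := not_le.mpr (lt_of_lt_of_le ha1 hab)
      rw [if_neg hb1]
      rcases le_or_gt a E with ha2 | ha2
      · rw [if_pos ha2]
        rcases le_or_gt b E with hb2 | hb2
        · rw [if_pos hb2]
          exact hψmono (hlogmem a ha1.le ha2) (hlogmem b (by linarith) hb2)
            (Real.log_le_log (by linarith) hab)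
        · rw [if_neg (not_le.mpr hb2)]
          exact hψub _ (hlogmem a ha1.le ha2)
      · rw [if_neg (not_le.mpr ha2)]
        rw [if_neg (not_le.mpr (lt_of_lt_of_le ha2 hab))]
  have hwconvex : ConvexOn ℝ (Set.Ici 0) w :=
    MonotoneOn.convexOn_of_deriv (convex_Ici 0) hwcont hwdiff hwdmono
  -- w ≤ 0
  have hwle0 : ∀ y ∈ Set.Ici (0 : ℝ), w y ≤ 0 := by
    intro y hy
    have hy0 : (0 : ℝ) ≤ y := hy
    simp only [hw]
    split_ifs with h1 h2
    · have h3 : 0 ≤ m * (y + 1) := mul_nonneg hmpos.le (by linarith)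
      linarith
    · have := hφle _ (hlogmem y (by linarith) h2)
      linarith
    · linarith
  -- w ≤ Hl
  have hwleHl : ∀ y ∈ Set.Ici (0 : ℝ), w y ≤ Hl y := by
    intro y hy
    have hy0 : (0 : ℝ) ≤ y := hy
    simp only [hw]
    split_ifs with h1 h2
    · rcases eq_or_lt_of_le hy0 with h | h
      · rw [← h, hHl0]; linarith
      · rw [hHl y h]
        have hA : 0 ≤ Real.sqrt y * (c * (Real.log y) ^ 2) := by positivity
        have hB : Real.sqrt y ≤ (y + 1) / 2 := by
          have h01 := Real.sq_sqrt hy0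
          have h02 : (Real.sqrt y - 1) ^ 2 = y - 2 * Real.sqrt y + 1 := by
            linear_combination h01
          have h03 := sq_nonneg (Real.sqrt y - 1)
          linarith
        have hC : m * Real.sqrt y ≤ m * ((y + 1) / 2) :=
          mul_le_mul_of_nonneg_left hB hmpos.le
        linarith [hA, hC]
    · rw [hHlφ y (by linarith)]
    · rw [hHlφ y (by linarith [hE0])]
      exact hφgeB _ (Real.log_nonneg (by linarith))
  -- w = W₀ on [1,∞)
  have hwW : ∀ y ∈ Set.Ici (1 : ℝ), w y = W₀ y := by
    intro y hy
    have hy1 : (1 : ℝ) ≤ y := hy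
    rcases le_or_gt y E with h | h
    · rw [hW₀l y ⟨hy1, by rw [hΨf]; exact h⟩, hHlφ y (by linarith)]
      simp only [hw]
      rcases eq_or_lt_of_le hy1 with h1 | h1
      · rw [if_pos h1.ge, ← h1, Real.log_one, hφ0]; ring
      · rw [if_neg (not_le.mpr h1), if_pos h]
    · rw [hW₀r y (by rw [hΨf]; exact h)]
      simp only [hw]
      rw [if_neg (not_le.mpr (hE1.trans h)), if_neg (not_le.mpr h)]
  -- part (ii): antitonicity of nonpositive convex functions
  have hanti : ∀ g : ℝ → ℝ, ConvexOn ℝ (Set.Ici 0) g → (∀ y ∈ Set.Ici (0 : ℝ), g y ≤ 0) →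
      ∀ a b : ℝ, 0 ≤ a → a ≤ b → g b ≤ g a := by
    intro g hg hg0 a b ha hab
    by_contra hcon
    push_neg at hcon
    have hablt : a < b := by
      rcases eq_or_lt_of_le hab with h | h
      · exact absurd (h ▸ hcon) (lt_irrefl _)
      · exact h
    set σ := (g b - g a) / (b - a) with hσ
    have hσpos : 0 < σ := div_pos (by linarith) (by linarith)
    have hgb0 : g b ≤ 0 := hg0 b (Set.mem_Ici.mpr (ha.trans hab))
    set z := b + -(g b) / σ + 1 with hz
    have hdiv0 : 0 ≤ -(g b) / σ := div_nonneg (by linarith) hσpos.le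
    have hbz : b < z := by rw [hz]; linarith
    have hslope := hg.slope_mono_adjacent (Set.mem_Ici.mpr ha)
      (Set.mem_Ici.mpr (show (0 : ℝ) ≤ z by linarith)) hablt hbz
    have hzb : (0 : ℝ) < z - b := by linarith
    have h5 : σ * (z - b) ≤ g z - g b := by
      rw [← hσ] at hslope
      calc σ * (z - b) ≤ (g z - g b) / (z - b) * (z - b) := by
            apply mul_le_mul_of_nonneg_right hslope hzb.le
        _ = g z - g b := by field_simp
    have h6 : σ * (z - b) = -(g b) + σ := by
      rw [hz]
      field_simp
      ring
    have h7 : g z ≤ 0 := hg0 z (Set.mem_Ici.mpr (by linarith))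
    linarith
  refine ⟨⟨w, hwconvex, hwle0, hwleHl, hwW⟩, ?_, hB0⟩
  intro g hgc hg0 hgH y hy
  have hy1 : (1 : ℝ) ≤ y := hy
  rcases le_or_gt y (Ψ f₀) with h | h
  · rw [hW₀l y ⟨hy1, h⟩]
    exact hgH y (Set.mem_Ici.mpr (by linarith))
  · rw [hW₀r y h]
    have hΨpos : (0 : ℝ) < Ψ f₀ := by rw [hΨf]; exact hE0
    have h1 : g y ≤ g (Ψ f₀) := hanti g hgc hg0 (Ψ f₀) y hΨpos.le h.le
    have h2 : g (Ψ f₀) ≤ Hl (Ψ f₀) := hgH _ (Set.mem_Ici.mpr hΨpos.le)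
    have h3 : Hl (Ψ f₀) = B₀ := by
      rw [hHlφ _ hΨpos, hΨf, hEdef, Real.log_exp, hφT]
    linarith
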